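/- Let c be an integer and φ(z) = z² + c as a map ℚ → ℚ. Suppose α ∈ ℚ is preperiodic for φ, i.e. φ^[i](α) = φ^[j](α) for some natural numbers i ≠ j. Then φ^[4](α) = φ^[2](α), and there exists an odd integer m such that either 4c = 1 − m² and 2·φ^[2](α) ∈ {1 + m, 1 − m}, or 4c = −(m² + 3) and 2·φ^[2](α) ∈ {−1 + m, −1 − m}. -/

import Mathlib

private def fZ (c : ℤ) : ℤ → ℤ := fun x => x ^ 2 + c

/-- If two integer squares differ by 1, the smaller is 0 and the larger is 1. -/
private lemma sq_succ_sq (a b : ℤ) (h : a ^ 2 = b ^ 2 + 1) : b = 0 ∧ a ^ 2 = 1 := by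
  have h1 : (a - b) * (a + b) = 1 := by linear_combination h
  rcases Int.eq_one_or_neg_one_of_mul_eq_one' h1 with ⟨h2, h3⟩ | ⟨h2, h3⟩
  · have hb : b = 0 := by omega
    have ha : a = 1 := by omega
    exact ⟨hb, by rw [ha]; norm_num⟩
  · have hb : b = 0 := by omega
    have ha : a = -1 := by omega
    exact ⟨hb, by rw [ha]; norm_num⟩

/-- Combinatorial core: an orbit of z ↦ z² + c that is m-periodic (m ≥ 1) and never
repeats at distance 1 or 2 is impossible. -/
private lemma core (c : ℤ) (x : ℕ → ℤ) (m : ℕ) (hm : 1 ≤ m)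
    (hx : ∀ k, x (k + 1) = x k ^ 2 + c)
    (hper : ∀ k, x (k + m) = x k)
    (hne1 : ∀ k, x (k + 1) ≠ x k)
    (hne2 : ∀ k, x (k + 2) ≠ x k) : False := by
  have hrec : ∀ k, x (k + 2) - x (k + 1) = (x (k + 1) - x k) * (x (k + 1) + x k) := by
    intro k
    have h1 := hx k
    have h2 := hx (k + 1)
    rw [show k + 1 + 1 = k + 2 by omega] at h2
    rw [h2, h1]; ring
  have hchain : ∀ k t, x (k + 1) - x k ∣ x (k + t + 1) - x (k + t) := by
    intro k t
    induction t with
    | zero => exact dvd_rfl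
    | succ t ih =>
        rw [show k + (t + 1) + 1 = (k + t) + 2 by omega,
          show k + (t + 1) = (k + t) + 1 by omega, hrec (k + t)]
        exact ih.mul_right _
  have hdne : ∀ k, x (k + 1) - x k ≠ 0 := by
    intro k hk
    exact hne1 k (by linarith [sub_eq_zero.mp hk])
  have he : ∀ k, x (k + 1) + x k = 1 ∨ x (k + 1) + x k = -1 := by
    intro k
    have h1 : x (k + 2) - x (k + 1) ∣ x (k + 1) - x k := by
      have h0 := hchain (k + 1) (m - 1)
      rw [show k + 1 + (m - 1) + 1 = (k + 1) + m by omega,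
        show k + 1 + (m - 1) = k + m by omega, hper, hper] at h0
      exact h0
    obtain ⟨w, hw⟩ := h1
    rw [hrec k] at hw
    have h3 : (x (k + 1) + x k) * w = 1 := by
      have h2 : (x (k + 1) - x k) * ((x (k + 1) + x k) * w) = (x (k + 1) - x k) * 1 := by
        rw [← mul_assoc, ← hw]; ring
      exact mul_left_cancel₀ (hdne k) h2
    rcases Int.eq_one_or_neg_one_of_mul_eq_one' h3 with ⟨h4, _⟩ | ⟨h4, _⟩
    · exact Or.inl h4
    · exact Or.inr h4
  have halt : ∀ k, x (k + 2) + x (k + 1) = -(x (k + 1) + x k) := by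
    intro k
    have e1 : x (k + 2) - x k = (x (k + 2) + x (k + 1)) - (x (k + 1) + x k) := by ring
    have h5 : x (k + 2) - x k ≠ 0 := by
      intro hh
      exact hne2 k (by linarith [sub_eq_zero.mp hh])
    have h6 := he k
    have h7 : x (k + 2) + x (k + 1) = 1 ∨ x (k + 2) + x (k + 1) = -1 := by
      have h8 := he (k + 1)
      rwa [show k + 1 + 1 = k + 2 by omega] at h8
    rcases h6 with h6 | h6 <;> rcases h7 with h7 | h7
    · exact absurd (by linarith : x (k + 2) - x k = 0) h5
    · linarith
    · linarith
    · exact absurd (by linarith : x (k + 2) - x k = 0) h5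
  have heven : ∀ k, x (2 * k + 1) + x (2 * k) = x 1 + x 0 := by
    intro k
    induction k with
    | zero => norm_num
    | succ k ih =>
        have h1 := halt (2 * k)
        have h2 := halt (2 * k + 1)
        rw [show 2 * k + 1 + 2 = 2 * (k + 1) + 1 by omega,
          show 2 * k + 1 + 1 = 2 * (k + 1) by omega] at h2
        rw [show 2 * k + 2 = 2 * (k + 1) by omega] at h1
        rw [h2, h1, neg_neg]
        exact ih
  have hx2 : ∀ k : ℕ, x (2 * k) = x 0 - 2 * (k : ℤ) * (x 1 + x 0) := by
    intro k
    induction k with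
    | zero => norm_num
    | succ k ih =>
        have h1 := halt (2 * k)
        have hE := heven k
        rw [show 2 * k + 2 = 2 * (k + 1) by omega] at h1
        have : x (2 * (k + 1)) = x (2 * k) - 2 * (x 1 + x 0) := by
          rw [hE] at h1
          have h9 := heven k
          linarith
        rw [this, ih]
        push_cast
        ring
  have hfin := hx2 m
  have h2m : x (2 * m) = x 0 := by
    have h1 := hper m
    have h2 := hper 0
    rw [show (0 : ℕ) + m = m by omega] at h2
    rw [show 2 * m = m + m by omega, h1, h2]
  rw [h2m] at hfin
  have hE0 := he 0
  rw [show (0 : ℕ) + 1 = 1 by omega] at hE0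
  have hm' : (1 : ℤ) ≤ (m : ℤ) := by exact_mod_cast hm
  rcases hE0 with h | h <;> rw [h] at hfin <;> nlinarith

/-- An integer periodic point of z^2 + c satisfies f² y = y. -/
private lemma periodic_two (c y : ℤ) (n : ℕ) (hn : 0 < n)
    (h : (fZ c)^[n] y = y) : (fZ c)^[2] y = y := by
  by_contra hcon
  have hmuls : ∀ s, (fZ c)^[n * s] y = y := by
    intro s
    induction s with
    | zero => simp
    | succ s ih =>
        rw [show n * (s + 1) = n + n * s by ring, Function.iterate_add_apply, ih, h]
  refine core c (fun k => (fZ c)^[k] y) n hn (fun k => ?_) (fun k => ?_)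
    (fun k hk => ?_) (fun k hk => ?_)
  · show (fZ c)^[k + 1] y = ((fZ c)^[k] y) ^ 2 + c
    rw [Function.iterate_succ_apply']
    rfl
  · show (fZ c)^[k + n] y = (fZ c)^[k] y
    rw [Function.iterate_add_apply, h]
  · -- consecutive equal orbit points force f y = y
    have hstep : ∀ t, (fZ c)^[k + t] y = (fZ c)^[k] y := by
      intro t
      induction t with
      | zero => rfl
      | succ t ih =>
          have e1 : (fZ c)^[k + (t + 1)] y = fZ c ((fZ c)^[k + t] y) := by
            rw [show k + (t + 1) = (k + t) + 1 by omega, Function.iterate_succ_apply']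
          rw [e1, ih]
          have e2 : fZ c ((fZ c)^[k] y) = (fZ c)^[k + 1] y :=
            (Function.iterate_succ_apply' _ _ _).symm
          rw [e2, hk]
    have hge : k ≤ n * (k + 1) := le_trans (Nat.le_succ k) (Nat.le_mul_of_pos_left _ hn)
    have hky : (fZ c)^[k] y = y := by
      have h1 := hstep (n * (k + 1) - k)
      rw [show k + (n * (k + 1) - k) = n * (k + 1) by omega, hmuls] at h1
      exact h1.symm
    have hfy : fZ c y = y := by
      have h2 : (fZ c)^[k + 1] y = fZ c ((fZ c)^[k] y) := Function.iterate_succ_apply' _ _ _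
      rw [hk, hky] at h2
      exact h2.symm
    apply hcon
    rw [show (2 : ℕ) = 1 + 1 from rfl, Function.iterate_add_apply]
    simp [hfy]
  · -- orbit points two apart equal force f² y = y
    have hstep : ∀ t, (fZ c)^[k + t + 2] y = (fZ c)^[k + t] y := by
      intro t
      induction t with
      | zero => exact hk
      | succ t ih =>
          rw [show k + (t + 1) + 2 = (k + t + 2) + 1 by omega,
            show k + (t + 1) = (k + t) + 1 by omega,
            Function.iterate_succ_apply' (fZ c) (k + t + 2) y,
            Function.iterate_succ_apply' (fZ c) (k + t) y, ih]
    apply hcon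
    have hge : k ≤ n * (k + 1) := le_trans (Nat.le_succ k) (Nat.le_mul_of_pos_left _ hn)
    have h1 := hstep (n * (k + 1) - k)
    rw [show k + (n * (k + 1) - k) = n * (k + 1) by omega] at h1
    rw [show n * (k + 1) + 2 = 2 + n * (k + 1) by omega, Function.iterate_add_apply,
      hmuls] at h1
    exact h1

/-- tail step -/
private lemma tail_step (c r s t : ℤ) (hr : fZ c r = s) (hs : fZ c s = t)
    (h : (fZ c)^[2] (fZ c t) = fZ c t) : (fZ c)^[2] t = t := by
  obtain ⟨v, hv⟩ : ∃ v, fZ c t = v := ⟨_, rfl⟩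
  obtain ⟨u, hu⟩ : ∃ u, fZ c v = u := ⟨_, rfl⟩
  have hfu : fZ c u = v := by
    have h1 : (fZ c)^[2] v = fZ c (fZ c v) := by
      rw [show (2 : ℕ) = 1 + 1 from rfl, Function.iterate_add_apply]
      rfl
    rw [hv, h1, hu] at h
    exact h
  have hgoal : (fZ c)^[2] t = u := by
    rw [show (2 : ℕ) = 1 + 1 from rfl, Function.iterate_add_apply]
    show fZ c (fZ c t) = u
    rw [hv, hu]
  rw [hgoal]
  by_contra hne
  have hne' : u ≠ t := hne
  have ht2 : t ^ 2 = u ^ 2 := by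
    have h1 : t ^ 2 + c = v := hv
    have h2 : u ^ 2 + c = v := hfu
    linarith
  have htu : t = -u := by
    have h1 : (t - u) * (t + u) = 0 := by linear_combination ht2
    rcases mul_eq_zero.mp h1 with h2 | h2
    · exact absurd (by linarith : u = t) hne'
    · linarith
  have hu0 : u ≠ 0 := by
    intro h0
    apply hne'
    rw [h0] at htu ⊢
    omega
  have hst : s ^ 2 + c = -u := by rw [← htu]; exact hs
  by_cases huv : u = v
  · -- fixed point case
    have hp : u ^ 2 + c = u := hfu.trans huv.symm
    have hs2 : (u - 1) ^ 2 = s ^ 2 + 1 := by linear_combination hp - hst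
    obtain ⟨hs0, hu1⟩ := sq_succ_sq (u - 1) s hs2
    have hu2 : u = 2 := by
      have h5 : (u - 2) * u = 0 := by linear_combination hu1
      rcases mul_eq_zero.mp h5 with h6 | h6
      · linarith
      · exact absurd h6 hu0
    have hcm2 : c = -2 := by rw [hu2] at hp; linarith
    have hr2 : r ^ 2 = 2 := by
      have h7 : r ^ 2 + c = s := hr
      rw [hcm2, hs0] at h7
      linarith
    have h1 : (r - 1) * (r + 1) = 1 := by linear_combination hr2
    rcases Int.eq_one_or_neg_one_of_mul_eq_one' h1 with ⟨h2, h3⟩ | ⟨h2, h3⟩ <;> omega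
  · -- 2-cycle case
    have h2 : u ^ 2 + c = v := hfu
    have h3 : v ^ 2 + c = u := hu
    have h4 : (u - v) * (u + v + 1) = 0 := by linear_combination h2 - h3
    have h5 : u + v = -1 := by
      rcases mul_eq_zero.mp h4 with h6 | h6
      · exact absurd (by linarith : u = v) huv
      · linarith
    have hs2 : s ^ 2 = u ^ 2 + 1 := by
      linear_combination hst - h3 + (v - u - 1) * h5
    obtain ⟨hu0', _⟩ := sq_succ_sq s u hs2
    exact hu0 hu0'

private lemma down_step (c a : ℤ) :
    ∀ k, (fZ c)^[2] ((fZ c)^[k + 2] a) = (fZ c)^[k + 2] a →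
      (fZ c)^[2] ((fZ c)^[2] a) = (fZ c)^[2] a := by
  intro k
  induction k with
  | zero => exact id
  | succ k ih =>
      intro h
      apply ih
      apply tail_step c ((fZ c)^[k] a) ((fZ c)^[k + 1] a) ((fZ c)^[k + 2] a)
      · exact (Function.iterate_succ_apply' _ _ _).symm
      · exact (Function.iterate_succ_apply' _ _ _).symm
      · have h1 : fZ c ((fZ c)^[k + 2] a) = (fZ c)^[k + 2 + 1] a :=
          (Function.iterate_succ_apply' _ _ _).symm
        rw [h1, show k + 2 + 1 = k + 1 + 2 by omega]
        exact h

theorem quadratic_integer_preperiodic_classification (c : ℤ) (α : ℚ)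
    (hpre : ∃ i j : ℕ, i ≠ j ∧
      (fun z : ℚ => z ^ 2 + (c : ℚ))^[i] α = (fun z : ℚ => z ^ 2 + (c : ℚ))^[j] α) :
    (fun z : ℚ => z ^ 2 + (c : ℚ))^[4] α = (fun z : ℚ => z ^ 2 + (c : ℚ))^[2] α ∧
    ∃ m : ℤ, Odd m ∧
      ((4 * c = 1 - m ^ 2 ∧
          (2 * (fun z : ℚ => z ^ 2 + (c : ℚ))^[2] α = 1 + (m : ℚ) ∨
           2 * (fun z : ℚ => z ^ 2 + (c : ℚ))^[2] α = 1 - (m : ℚ))) ∨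
       (4 * c = -(m ^ 2 + 3) ∧
          (2 * (fun z : ℚ => z ^ 2 + (c : ℚ))^[2] α = -1 + (m : ℚ) ∨
           2 * (fun z : ℚ => z ^ 2 + (c : ℚ))^[2] α = -1 - (m : ℚ)))) := by
  set φ : ℚ → ℚ := fun z : ℚ => z ^ 2 + (c : ℚ) with hφ
  obtain ⟨i, j, hij, heq⟩ := hpre
  obtain ⟨i, j, hij, heq⟩ : ∃ i j : ℕ, i < j ∧ φ^[i] α = φ^[j] α := by
    rcases Ne.lt_or_gt hij with h | h
    · exact ⟨i, j, h, heq⟩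
    · exact ⟨j, i, h, heq.symm⟩
  have hden1 : ∀ q : ℚ, (φ q).den = q.den ^ 2 := by
    intro q
    show (q ^ 2 + (c : ℚ)).den = q.den ^ 2
    have h1 : (q ^ 2 + (c : ℚ)).den ∣ q.den ^ 2 := by
      have h0 := Rat.add_den_dvd (q ^ 2) (c : ℚ)
      simpa [Rat.den_pow] using h0
    have h2 : q.den ^ 2 ∣ (q ^ 2 + (c : ℚ)).den := by
      have h3 : q ^ 2 = (q ^ 2 + (c : ℚ)) + ((-c : ℤ) : ℚ) := by push_cast; ring
      have h4 : (q ^ 2).den ∣ (q ^ 2 + (c : ℚ)).den * ((-c : ℤ) : ℚ).den := by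
        conv_lhs => rw [h3]
        exact Rat.add_den_dvd _ _
      simpa [Rat.den_pow] using h4
    exact Nat.dvd_antisymm h1 h2
  have hdenk : ∀ k, (φ^[k] α).den = α.den ^ 2 ^ k := by
    intro k
    induction k with
    | zero => simp
    | succ k ih =>
        rw [Function.iterate_succ_apply', hden1, ih, ← pow_mul, pow_succ]
  have hdone : α.den = 1 := by
    by_contra hd
    have h2 : 2 ≤ α.den := by
      have h0 := α.den_pos
      omega
    have h3 : α.den ^ 2 ^ i = α.den ^ 2 ^ j := by rw [← hdenk, ← hdenk, heq]
    have h4 : (2 : ℕ) ^ i = 2 ^ j := Nat.pow_right_injective h2 h3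
    exact absurd (Nat.pow_right_injective le_rfl h4) hij.ne
  have hαa : ((α.num : ℤ) : ℚ) = α := (Rat.den_eq_one_iff α).mp hdone
  set a : ℤ := α.num with ha
  have hcast : ∀ (k : ℕ) (x : ℤ), φ^[k] (x : ℚ) = (((fZ c)^[k] x : ℤ) : ℚ) := by
    intro k
    induction k with
    | zero => intro x; simp
    | succ k ih =>
        intro x
        rw [Function.iterate_succ_apply', Function.iterate_succ_apply', ih]
        show φ (((fZ c)^[k] x : ℤ) : ℚ) = ((fZ c ((fZ c)^[k] x) : ℤ) : ℚ)
        simp only [hφ, fZ]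
        push_cast
        ring
  have heqZ : (fZ c)^[i] a = (fZ c)^[j] a := by
    have h1 : φ^[i] (a : ℚ) = φ^[j] (a : ℚ) := by rw [hαa]; exact heq
    rw [hcast, hcast] at h1
    exact_mod_cast h1
  have hQi : (fZ c)^[2] ((fZ c)^[i] a) = (fZ c)^[i] a := by
    apply periodic_two c ((fZ c)^[i] a) (j - i) (by omega)
    rw [← Function.iterate_add_apply, show j - i + i = j by omega, ← heqZ]
  have hQi2 : (fZ c)^[2] ((fZ c)^[i + 2] a) = (fZ c)^[i + 2] a := by
    have h1 : (fZ c)^[i + 2] a = (fZ c)^[2] ((fZ c)^[i] a) := by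
      rw [← Function.iterate_add_apply]
      congr 1
      omega
    rw [h1, hQi]
    exact hQi
  have hQ2 : (fZ c)^[2] ((fZ c)^[2] a) = (fZ c)^[2] a := down_step c a i hQi2
  have hβq : φ^[2] α = (((fZ c)^[2] a : ℤ) : ℚ) := by rw [← hαa, hcast 2 a]
  constructor
  · show φ^[4] α = φ^[2] α
    rw [← hαa, hcast 4 a, hcast 2 a]
    have h1 : (fZ c)^[4] a = (fZ c)^[2] ((fZ c)^[2] a) := by
      rw [show (4 : ℕ) = 2 + 2 from rfl, Function.iterate_add_apply]
    rw [h1, hQ2]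
  · obtain ⟨β, hβ⟩ : ∃ b : ℤ, (fZ c)^[2] a = b := ⟨_, rfl⟩
    rw [hβ] at hQ2 hβq
    have hβeq : (β ^ 2 + c) ^ 2 + c = β := by
      have h1 : (fZ c)^[2] β = fZ c (fZ c β) := by
        rw [show (2 : ℕ) = 1 + 1 from rfl, Function.iterate_add_apply]
        rfl
      rw [h1] at hQ2
      simpa [fZ] using hQ2
    have hfact : (β ^ 2 - β + c) * (β ^ 2 + β + c + 1) = 0 := by linear_combination hβeq
    rcases mul_eq_zero.mp hfact with hcase | hcase
    · refine ⟨2 * β - 1, ⟨β - 1, by ring⟩,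
        Or.inl ⟨by linear_combination 4 * hcase, Or.inl ?_⟩⟩
      rw [hβq]
      push_cast
      ring
    · refine ⟨2 * β + 1, ⟨β, by ring⟩,
        Or.inr ⟨by linear_combination 4 * hcase, Or.inl ?_⟩⟩
      rw [hβq]
      push_cast
      ring
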